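/- Let x = (x_1, …, x_{n+m}) ∈ {0,1}^{n+m} be a fixed bit string with n, m ≥ 1, and let T be a uniformly random subset of {1, …, n+m} of size m. Let Λ_T denote the fraction of ones among the positions in T and Λ_{T̄} the fraction of ones among the n positions outside T. Then for every μ > 0, the probability that Λ_{T̄} ≥ Λ_T + μ is at most exp(−(2 n m² μ²) / ((n + m)(m + 1))). In particular, taking μ = √(((n + m)(m + 1)) / (n m²) · ln(2/ε)) for ε ∈ (0,1), the probability that Λ_{T̄} ≥ Λ_T + μ is at most (ε/2)². -/

import Mathlib

open Finset


lemma two_point_hoeffding (p q a b : ℝ) (hp : 0 ≤ p) (hq : 0 ≤ q)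
    (hpq : p + q = 1) (hmean : p * a + q * b = 0) :
    p * Real.exp a + q * Real.exp b ≤ Real.exp ((b - a) ^ 2 / 8) := by
  have h8 : (0:ℝ) ≤ (b - a) ^ 2 / 8 := by positivity
  rcases eq_or_lt_of_le hp with hp0 | hp0
  · have hq1 : q = 1 := by linarith
    have hb : b = 0 := by
      have : q * b = 0 := by rw [← hp0] at hmean; linarith [hmean]
      simpa [hq1] using this
    simp [← hp0, hq1, hb]
    positivity
  rcases eq_or_lt_of_le hq with hq0 | hq0
  · have hp1 : p = 1 := by linarith
    have ha : a = 0 := by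
      have : p * a = 0 := by rw [← hq0] at hmean; linarith [hmean]
      simpa [hp1] using this
    simp [← hq0, hp1, ha]
    positivity
  -- main case 0 < p, 0 < q
  set c : ℝ := (b - a) ^ 2 / 8 with hc
  set u : ℝ → ℝ := fun t => p * Real.exp (a * t) + q * Real.exp (b * t) with hu
  set v : ℝ → ℝ := fun t => p * a * Real.exp (a * t) + q * b * Real.exp (b * t) with hv
  set w : ℝ → ℝ := fun t => p * a ^ 2 * Real.exp (a * t) + q * b ^ 2 * Real.exp (b * t) with hw
  have upos : ∀ t, 0 < u t := fun t => by positivity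
  have hdu : ∀ t, HasDerivAt u (v t) t := by
    intro t
    have h1 : HasDerivAt (fun t => Real.exp (a * t)) (a * Real.exp (a * t)) t := by
      simpa [mul_comm, Function.comp_def] using (Real.hasDerivAt_exp (a * t)).comp t ((hasDerivAt_id t).const_mul a)
    have h2 : HasDerivAt (fun t => Real.exp (b * t)) (b * Real.exp (b * t)) t := by
      simpa [mul_comm, Function.comp_def] using (Real.hasDerivAt_exp (b * t)).comp t ((hasDerivAt_id t).const_mul b)
    have := (h1.const_mul p).add (h2.const_mul q)
    simpa [hv, mul_assoc, Pi.add_def] using this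
  have hdv : ∀ t, HasDerivAt v (w t) t := by
    intro t
    have h1 : HasDerivAt (fun t => Real.exp (a * t)) (a * Real.exp (a * t)) t := by
      simpa [mul_comm, Function.comp_def] using (Real.hasDerivAt_exp (a * t)).comp t ((hasDerivAt_id t).const_mul a)
    have h2 : HasDerivAt (fun t => Real.exp (b * t)) (b * Real.exp (b * t)) t := by
      simpa [mul_comm, Function.comp_def] using (Real.hasDerivAt_exp (b * t)).comp t ((hasDerivAt_id t).const_mul b)
    have := (h1.const_mul (p * a)).add (h2.const_mul (q * b))
    have e : ∀ t, p * a * (a * Real.exp (a * t)) + q * b * (b * Real.exp (b * t)) = w t := by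
      intro t; simp [hw]; ring
    simpa [hv, e t, Pi.add_def] using this
  set f : ℝ → ℝ := fun t => Real.log (u t) - c * t ^ 2 with hf
  set f' : ℝ → ℝ := fun t => v t / u t - 2 * c * t with hf'
  set f'' : ℝ → ℝ := fun t => (w t * u t - v t ^ 2) / (u t) ^ 2 - 2 * c with hf''
  have hdf : ∀ t, HasDerivAt f (f' t) t := by
    intro t
    have h1 : HasDerivAt (fun t => Real.log (u t)) (v t / u t) t :=
      (hdu t).log (upos t).ne'
    have h2 : HasDerivAt (fun t : ℝ => c * t ^ 2) (2 * c * t) t := by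
      have := (hasDerivAt_pow 2 t).const_mul c
      simpa [mul_comm, mul_assoc, mul_left_comm] using this
    simpa [hf, hf', Pi.sub_def] using h1.sub h2
  have hdf' : ∀ t, HasDerivAt f' (f'' t) t := by
    intro t
    have h1 : HasDerivAt (fun t => v t / u t) ((w t * u t - v t * v t) / (u t) ^ 2) t :=
      (hdv t).div (hdu t) (upos t).ne'
    have h2 : HasDerivAt (fun t : ℝ => 2 * c * t) (2 * c) t := by
      simpa using (hasDerivAt_id t).const_mul (2 * c)
    have := h1.sub h2
    simpa [hf', hf'', sq, Pi.sub_def] using this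
  have hf''le : ∀ t, f'' t ≤ 0 := by
    intro t
    have key : w t * u t - v t ^ 2 = p * q * (a - b) ^ 2 * (Real.exp (a * t) * Real.exp (b * t)) := by
      simp only [hu, hv, hw]; ring
    have hden : 4 * (p * q * (Real.exp (a * t) * Real.exp (b * t))) ≤ (u t) ^ 2 := by
      have hsq : 0 ≤ (p * Real.exp (a * t) - q * Real.exp (b * t)) ^ 2 := sq_nonneg _
      simp only [hu]; nlinarith [hsq]
    have hdpos : 0 < 4 * (p * q * (Real.exp (a * t) * Real.exp (b * t))) := by positivity
    have hnum : 0 ≤ p * q * (a - b) ^ 2 * (Real.exp (a * t) * Real.exp (b * t)) := by positivity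
    have h1 : (w t * u t - v t ^ 2) / (u t) ^ 2
        ≤ (p * q * (a - b) ^ 2 * (Real.exp (a * t) * Real.exp (b * t)))
          / (4 * (p * q * (Real.exp (a * t) * Real.exp (b * t)))) := by
      rw [key]
      exact div_le_div_of_nonneg_left hnum hdpos hden
    have h2 : (p * q * (a - b) ^ 2 * (Real.exp (a * t) * Real.exp (b * t)))
          / (4 * (p * q * (Real.exp (a * t) * Real.exp (b * t)))) = (a - b) ^ 2 / 4 := by
      have h4 : p * q * (Real.exp (a * t) * Real.exp (b * t)) ≠ 0 := by positivity
      field_simp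
    have : (a - b) ^ 2 / 4 = 2 * c := by rw [hc]; ring
    simp only [hf'']
    linarith [h1, h2.le, this]
  -- f 0 = 0, f' 0 = 0
  have hf0 : f 0 = 0 := by
    simp [hf, hu, hpq]
  have hf'0 : f' 0 = 0 := by
    simp only [hf', hv, hu]
    simp [hpq, hmean]
  -- MVT twice
  obtain ⟨c1, hc1, hslope1⟩ := exists_hasDerivAt_eq_slope f f' (by norm_num : (0:ℝ) < 1)
    (fun x _ => (hdf x).continuousAt.continuousWithinAt) (fun x _ => hdf x)
  obtain ⟨c2, hc2, hslope2⟩ := exists_hasDerivAt_eq_slope f' f'' hc1.1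
    (fun x _ => (hdf' x).continuousAt.continuousWithinAt) (fun x _ => hdf' x)
  have hfc1 : f' c1 ≤ 0 := by
    have : f'' c2 = (f' c1 - f' 0) / (c1 - 0) := hslope2
    rw [hf'0, sub_zero, sub_zero] at this
    have h0 : f' c1 = f'' c2 * c1 := by
      rw [eq_div_iff (ne_of_gt hc1.1)] at this; linarith [this]
    rw [h0]
    exact mul_nonpos_of_nonpos_of_nonneg (hf''le c2) hc1.1.le
  have hf1 : f 1 ≤ 0 := by
    have : f' c1 = (f 1 - f 0) / (1 - 0) := hslope1
    rw [hf0] at this; simp at this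
    linarith [hfc1, this]
  have : Real.log (u 1) ≤ c := by
    have := hf1
    simp only [hf] at this
    nlinarith [this]
  have hfin : u 1 ≤ Real.exp c := by
    rw [← Real.exp_log (upos 1)]
    exact Real.exp_le_exp.mpr this
  simpa [hu] using hfin


section Aux
variable {ι : Type*} [DecidableEq ι]


lemma sum_powersetCard_succ (s : Finset ι) (n : ℕ) (g : Finset ι → ℝ) :
    ∑ a ∈ s, ∑ B ∈ (s.erase a).powersetCard n, g (insert a B)
      = ∑ A ∈ s.powersetCard (n + 1), ((n : ℝ) + 1) * g A := by
  have hconst : ∀ A ∈ s.powersetCard (n + 1), ((n : ℝ) + 1) * g A = ∑ _a ∈ A, g A := by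
    intro A hA
    rw [Finset.sum_const, (Finset.mem_powersetCard.mp hA).2]
    push_cast [nsmul_eq_mul]
    ring
  rw [Finset.sum_congr rfl hconst, Finset.sum_sigma', Finset.sum_sigma']
  apply Finset.sum_bij' (i := fun (p : Σ _a : ι, Finset ι) _hp => (⟨insert p.1 p.2, p.1⟩ : Σ _A : Finset ι, ι))
    (j := fun (q : Σ _A : Finset ι, ι) _hq => (⟨q.2, q.1.erase q.2⟩ : Σ _a : ι, Finset ι))
  · rintro ⟨a, B⟩ hp
    simp only [Finset.mem_sigma, Finset.mem_powersetCard] at hp ⊢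
    obtain ⟨ha, hBsub, hBcard⟩ := hp
    have haB : a ∉ B := fun h => (Finset.mem_erase.mp (hBsub h)).1 rfl
    refine ⟨⟨?_, ?_⟩, Finset.mem_insert_self _ _⟩
    · exact Finset.insert_subset ha (hBsub.trans (Finset.erase_subset _ _))
    · rw [Finset.card_insert_of_notMem haB, hBcard]
  · rintro ⟨A, a⟩ hq
    simp only [Finset.mem_sigma, Finset.mem_powersetCard] at hq ⊢
    obtain ⟨⟨hAsub, hAcard⟩, haA⟩ := hq
    refine ⟨hAsub haA, ?_, ?_⟩
    · exact Finset.erase_subset_erase _ hAsub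
    · rw [Finset.card_erase_of_mem haA, hAcard]; omega
  · rintro ⟨a, B⟩ hp
    simp only [Finset.mem_sigma, Finset.mem_powersetCard] at hp
    have haB : a ∉ B := fun h => (Finset.mem_erase.mp (hp.2.1 h)).1 rfl
    simp [Finset.erase_insert haB]
  · rintro ⟨A, a⟩ hq
    simp only [Finset.mem_sigma, Finset.mem_powersetCard] at hq
    simp [Finset.insert_erase hq.2]
  · rintro ⟨a, B⟩ _hp
    rfl


lemma serfling_mgf (D : ℕ) (hD : 1 ≤ D) :
    ∀ (n : ℕ) (s M : Finset ι), M ⊆ s → s.card = n + D → ∀ t : ℝ,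
    ∑ A ∈ s.powersetCard n,
        Real.exp (t * (((A ∩ M).card : ℝ) - n * M.card / s.card))
      ≤ (s.card.choose n : ℝ) *
        Real.exp (t ^ 2 * D ^ 2 / 8 * ∑ j ∈ Finset.Ico D (n + D), (1 : ℝ) / (j : ℝ) ^ 2) := by
  intro n
  induction n with
  | zero =>
    intro s M hM hcard t
    simp [Finset.powersetCard_zero]
  | succ n ih =>
    intro s M hM hcard t
    simp only [Nat.cast_add, Nat.cast_one]
    have hDr : (1:ℝ) ≤ (D:ℝ) := by exact_mod_cast hD
    have hnr : (0:ℝ) ≤ (n:ℝ) := Nat.cast_nonneg n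
    have hN : s.card = n + 1 + D := by omega
    have hNpos : (0:ℝ) < (n:ℝ) + 1 + D := by linarith
    have hN1pos : (0:ℝ) < (n:ℝ) + D := by linarith
    have hN1ne : ((n:ℝ) + D) ≠ 0 := ne_of_gt hN1pos
    have hNne : ((n:ℝ) + 1 + D) ≠ 0 := ne_of_gt hNpos
    set K : ℕ := M.card with hK
    have hKle : K ≤ n + 1 + D := by rw [← hN, hK]; exact Finset.card_le_card hM
    set g1 : ℝ := 1 + n * ((K:ℝ) - 1) / ((n:ℝ) + D) - ((n:ℝ) + 1) * K / ((n:ℝ) + 1 + D) with hg1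
    set g0 : ℝ := n * (K:ℝ) / ((n:ℝ) + D) - ((n:ℝ) + 1) * K / ((n:ℝ) + 1 + D) with hg0
    set En : ℝ := t ^ 2 * D ^ 2 / 8 * ∑ j ∈ Finset.Ico D (n + D), (1 : ℝ) / (j : ℝ) ^ 2 with hEn
    set C : ℝ := ((n + D).choose n : ℝ) * Real.exp En with hC
    have hCpos : 0 < C := by
      rw [hC]
      have : 0 < (n + D).choose n := Nat.choose_pos (by omega)
      positivity
    set δ : ℝ := t ^ 2 * D ^ 2 / 8 * (1 / ((n:ℝ) + D) ^ 2) with hδ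
    -- inner bound for each a ∈ s
    have inner : ∀ a ∈ s,
        ∑ B ∈ (s.erase a).powersetCard n,
          Real.exp (t * ((((insert a B) ∩ M).card : ℝ) - ((n:ℝ) + 1) * K / s.card))
        ≤ C * Real.exp (t * (if a ∈ M then g1 else g0)) := by
      intro a ha
      have hecard : (s.erase a).card = n + D := by
        rw [Finset.card_erase_of_mem ha, hN]
        omega
      have hM'sub : M.erase a ⊆ s.erase a := Finset.erase_subset_erase _ hM
      have key : ∀ B ∈ (s.erase a).powersetCard n,
          Real.exp (t * ((((insert a B) ∩ M).card : ℝ) - ((n:ℝ) + 1) * K / s.card))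
          = Real.exp (t * (((B ∩ (M.erase a)).card : ℝ)
              - n * ((M.erase a).card : ℝ) / ((s.erase a).card : ℝ)))
            * Real.exp (t * (if a ∈ M then g1 else g0)) := by
        intro B hB
        obtain ⟨hBsub, hBcard⟩ := Finset.mem_powersetCard.mp hB
        have haB : a ∉ B := fun h => (Finset.mem_erase.mp (hBsub h)).1 rfl
        have hBM : B ∩ M.erase a = B ∩ M := by
          ext y
          simp only [Finset.mem_inter, Finset.mem_erase]
          exact ⟨fun ⟨h1, _, h3⟩ => ⟨h1, h3⟩, fun ⟨h1, h2⟩ => ⟨h1, fun he => haB (he ▸ h1), h2⟩⟩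
        rw [← Real.exp_add]
        congr 1
        rw [hecard, hBM]
        by_cases haM : a ∈ M
        · have hins : (insert a B) ∩ M = insert a (B ∩ M) := by
            ext y
            simp only [Finset.mem_inter, Finset.mem_insert]
            constructor
            · rintro ⟨(rfl | h1), h2⟩
              · exact Or.inl rfl
              · exact Or.inr ⟨h1, h2⟩
            · rintro (rfl | ⟨h1, h2⟩)
              · exact ⟨Or.inl rfl, haM⟩
              · exact ⟨Or.inr h1, h2⟩
          have haBM : a ∉ B ∩ M := fun h => haB (Finset.mem_inter.mp h).1
          have hK1 : 1 ≤ K := Finset.card_pos.mpr ⟨a, haM⟩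
          have hKe : ((M.erase a).card : ℝ) = (K:ℝ) - 1 := by
            rw [Finset.card_erase_of_mem haM]
            push_cast [show 1 ≤ M.card from hK1]
            ring
          rw [hins, Finset.card_insert_of_notMem haBM, hKe, hN]
          simp only [haM, if_true, hg1]
          push_cast
          ring
        · have hins : (insert a B) ∩ M = B ∩ M := by
            ext y
            simp only [Finset.mem_inter, Finset.mem_insert]
            constructor
            · rintro ⟨(rfl | h1), h2⟩
              · exact absurd h2 haM
              · exact ⟨h1, h2⟩
            · rintro ⟨h1, h2⟩; exact ⟨Or.inr h1, h2⟩
          have hKe : ((M.erase a).card : ℝ) = (K:ℝ) := by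
            rw [Finset.erase_eq_of_notMem haM]
          rw [hins, hKe, hN]
          simp only [haM, if_false, hg0]
          push_cast
          ring
      rw [Finset.sum_congr rfl key, ← Finset.sum_mul]
      refine mul_le_mul_of_nonneg_right ?_ (Real.exp_nonneg _)
      have h := ih (s.erase a) (M.erase a) hM'sub hecard t
      exact h.trans (le_of_eq (by rw [hC, hEn, hecard]))
    -- sum over a of the increment factors, via Hoeffding
    have hsum_incr : ∑ a ∈ s, Real.exp (t * (if a ∈ M then g1 else g0))
        ≤ ((n:ℝ) + 1 + D) * Real.exp δ := by
      have hsplit : ∑ a ∈ s, Real.exp (t * (if a ∈ M then g1 else g0))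
          = (K:ℝ) * Real.exp (t * g1) + ((n:ℝ) + 1 + D - K) * Real.exp (t * g0) := by
        rw [← Finset.sum_sdiff hM]
        have h1 : ∑ a ∈ M, Real.exp (t * (if a ∈ M then g1 else g0))
            = (K:ℝ) * Real.exp (t * g1) := by
          rw [Finset.sum_congr rfl (fun a ha => by rw [if_pos ha]), Finset.sum_const,
            nsmul_eq_mul]
        have h2 : ∑ a ∈ s \ M, Real.exp (t * (if a ∈ M then g1 else g0))
            = ((n:ℝ) + 1 + D - K) * Real.exp (t * g0) := by
          rw [Finset.sum_congr rfl (fun a ha => by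
              rw [if_neg (Finset.mem_sdiff.mp ha).2]), Finset.sum_const, nsmul_eq_mul,
            Finset.card_sdiff_of_subset hM, ← hK, hN]
          have : ((n + 1 + D - K : ℕ) : ℝ) = (n:ℝ) + 1 + D - K := by
            push_cast [hKle]; ring
          rw [this]
        rw [h1, h2]; ring
      rw [hsplit]
      set N : ℝ := (n:ℝ) + 1 + D with hNr
      have hKleR : (K:ℝ) ≤ N := by rw [hNr]; exact_mod_cast hKle
      have hmean0 : (K:ℝ) * g1 + (N - K) * g0 = 0 := by
        rw [hg1, hg0, hNr]
        field_simp
        ring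
      have hHoef := two_point_hoeffding ((K:ℝ) / N) ((N - K) / N) (t * g1) (t * g0)
        (by positivity)
        (div_nonneg (by linarith) hNpos.le)
        (by field_simp; ring)
        (by
          have e : (K:ℝ)/N * (t*g1) + (N-(K:ℝ))/N*(t*g0) = t/N * ((K:ℝ)*g1 + (N-(K:ℝ))*g0) := by
            ring
          rw [e, hmean0, mul_zero])
      have hexp_eq : (t * g0 - t * g1) ^ 2 / 8 = δ := by
        have hdiff : g1 - g0 = (D:ℝ) / ((n:ℝ) + D) := by
          rw [hg1, hg0]
          field_simp
          ring
        have e2 : t * g0 - t * g1 = -(t * ((D:ℝ) / ((n:ℝ) + D))) := by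
          rw [← hdiff]; ring
        rw [e2, hδ]
        field_simp
      rw [hexp_eq] at hHoef
      have hmul := mul_le_mul_of_nonneg_left hHoef hNpos.le
      calc (K:ℝ) * Real.exp (t * g1) + (N - K) * Real.exp (t * g0)
          = N * ((K:ℝ) / N * Real.exp (t * g1) + (N - K) / N * Real.exp (t * g0)) := by
            field_simp
        _ ≤ N * Real.exp δ := hmul
    -- combine
    have hswap := sum_powersetCard_succ s n
      (fun A => Real.exp (t * (((A ∩ M).card : ℝ) - ((n:ℝ) + 1) * K / s.card)))
    have hchain : ((n:ℝ) + 1) * ∑ A ∈ s.powersetCard (n + 1),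
        Real.exp (t * (((A ∩ M).card : ℝ) - ((n:ℝ) + 1) * K / s.card))
        ≤ ((n:ℝ) + 1 + D) * C * Real.exp δ := by
      rw [Finset.mul_sum, ← hswap]
      calc ∑ a ∈ s, ∑ B ∈ (s.erase a).powersetCard n,
            Real.exp (t * ((((insert a B) ∩ M).card : ℝ) - ((n:ℝ) + 1) * K / s.card))
          ≤ ∑ a ∈ s, C * Real.exp (t * (if a ∈ M then g1 else g0)) :=
            Finset.sum_le_sum inner
        _ = C * ∑ a ∈ s, Real.exp (t * (if a ∈ M then g1 else g0)) := by
            rw [Finset.mul_sum]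
        _ ≤ C * (((n:ℝ) + 1 + D) * Real.exp δ) :=
            mul_le_mul_of_nonneg_left hsum_incr hCpos.le
        _ = ((n:ℝ) + 1 + D) * C * Real.exp δ := by ring
    -- the choose identity
    have hchoose : ((n:ℝ) + 1 + D) * ((n + D).choose n : ℝ)
        = ((n + 1 + D).choose (n + 1) : ℝ) * ((n:ℝ) + 1) := by
      have h := Nat.add_one_mul_choose_eq (n + D) n
      have h' : (n + D + 1) * (n + D).choose n = (n + D + 1).choose (n + 1) * (n + 1) := by
        simpa [Nat.succ_eq_add_one] using h
      have h'' : (n + 1 + D) * (n + D).choose n = (n + 1 + D).choose (n + 1) * (n + 1) := by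
        have e1 : n + D + 1 = n + 1 + D := by omega
        rw [← e1]; exact h'
      exact_mod_cast h''
    -- final exponent split
    have hEsplit : Real.exp (t ^ 2 * D ^ 2 / 8 * ∑ j ∈ Finset.Ico D (n + 1 + D), (1 : ℝ) / (j : ℝ) ^ 2)
        = Real.exp En * Real.exp δ := by
      have e1 : n + 1 + D = n + D + 1 := by omega
      rw [e1, Finset.sum_Ico_succ_top (by omega : D ≤ n + D), ← Real.exp_add, hEn, hδ]
      congr 1
      push_cast
      ring
    -- put it together
    have hnpos : (0:ℝ) < (n:ℝ) + 1 := by linarith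
    have hrhs : ((n:ℝ) + 1 + D) * C * Real.exp δ
        = ((n:ℝ) + 1) * (((n + 1 + D).choose (n + 1) : ℝ) * (Real.exp En * Real.exp δ)) := by
      rw [hC]
      have e : ((n:ℝ) + 1 + D) * (((n + D).choose n : ℝ) * Real.exp En) * Real.exp δ
          = (((n:ℝ) + 1 + D) * ((n + D).choose n : ℝ)) * (Real.exp En * Real.exp δ) := by ring
      rw [e, hchoose]
      ring
    have hfinal : ∑ A ∈ s.powersetCard (n + 1),
        Real.exp (t * (((A ∩ M).card : ℝ) - ((n:ℝ) + 1) * K / s.card))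
        ≤ ((n + 1 + D).choose (n + 1) : ℝ) * (Real.exp En * Real.exp δ) := by
      apply le_of_mul_le_mul_left _ hnpos
      calc ((n:ℝ) + 1) * ∑ A ∈ s.powersetCard (n + 1),
            Real.exp (t * (((A ∩ M).card : ℝ) - ((n:ℝ) + 1) * K / s.card))
          ≤ ((n:ℝ) + 1 + D) * C * Real.exp δ := hchain
        _ = ((n:ℝ) + 1) * (((n + 1 + D).choose (n + 1) : ℝ) * (Real.exp En * Real.exp δ)) := hrhs
    rw [show (s.card).choose (n + 1) = (n + 1 + D).choose (n + 1) from by rw [hN], hEsplit]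
    exact hfinal


lemma telescope_sum (D : ℕ) (hD : 1 ≤ D) :
    ∀ n : ℕ, ∑ j ∈ Finset.Ico D (n + D), ((1:ℝ) / j - 1 / (j + 1))
      = 1 / D - 1 / (n + D) := by
  intro n
  induction n with
  | zero => simp
  | succ n ih =>
    have e1 : n + 1 + D = n + D + 1 := by omega
    rw [e1, Finset.sum_Ico_succ_top (by omega : D ≤ n + D), ih]
    push_cast
    ring

lemma sum_inv_sq_le (D : ℕ) (hD : 1 ≤ D) (n : ℕ) :
    ∑ j ∈ Finset.Ico D (n + D), (1:ℝ) / (j : ℝ) ^ 2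
      ≤ ((D:ℝ) + 1) * n / ((D:ℝ) ^ 2 * ((n:ℝ) + D)) := by
  have hDr : (1:ℝ) ≤ (D:ℝ) := by exact_mod_cast hD
  have hterm : ∀ j ∈ Finset.Ico D (n + D),
      (1:ℝ) / (j : ℝ) ^ 2 ≤ (1 + 1/(D:ℝ)) * ((1:ℝ) / j - 1 / (j + 1)) := by
    intro j hj
    have hjD : D ≤ j := (Finset.mem_Ico.mp hj).1
    have hjr : (1:ℝ) ≤ (j:ℝ) := le_trans hDr (by exact_mod_cast hjD)
    have hjpos : (0:ℝ) < (j:ℝ) := by linarith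
    have hj1pos : (0:ℝ) < (j:ℝ) + 1 := by linarith
    have hDj : (D:ℝ) ≤ (j:ℝ) := by exact_mod_cast hjD
    have hDpos : (0:ℝ) < (D:ℝ) := by linarith
    have hr : (1:ℝ) / (j:ℝ) - 1 / ((j:ℝ) + 1) = 1 / ((j:ℝ) * ((j:ℝ) + 1)) := by
      field_simp
      ring
    rw [hr, mul_one_div, div_le_div_iff₀ (by positivity) (by positivity)]
    have h4 : (j:ℝ) ≤ (j:ℝ) ^ 2 / (D:ℝ) := by
      rw [le_div_iff₀ hDpos]
      nlinarith [hDj, hjpos]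
    have h5 : (1 + 1/(D:ℝ)) * (j:ℝ) ^ 2 = (j:ℝ) ^ 2 + (j:ℝ) ^ 2 / (D:ℝ) := by
      field_simp
    nlinarith [h4, h5]
  calc ∑ j ∈ Finset.Ico D (n + D), (1:ℝ) / (j : ℝ) ^ 2
      ≤ ∑ j ∈ Finset.Ico D (n + D), (1 + 1/(D:ℝ)) * ((1:ℝ) / j - 1 / (j + 1)) :=
        Finset.sum_le_sum hterm
    _ = (1 + 1/(D:ℝ)) * (1 / D - 1 / ((n:ℝ) + D)) := by
        rw [← Finset.mul_sum, telescope_sum D hD n]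
    _ = ((D:ℝ) + 1) * n / ((D:ℝ) ^ 2 * ((n:ℝ) + D)) := by
        have hDpos : (0:ℝ) < (D:ℝ) := by
          have : (1:ℝ) ≤ (D:ℝ) := by exact_mod_cast hD
          linarith
        have hnDpos : (0:ℝ) < (n:ℝ) + D := by
          have := Nat.cast_nonneg (α := ℝ) n
          linarith
        field_simp
        ring

lemma serfling_count (n D : ℕ) (hn : 1 ≤ n) (hD : 1 ≤ D)
    (s M : Finset ι) (hM : M ⊆ s) (hcard : s.card = n + D) (τ : ℝ) (hτ : 0 < τ) :
    (((s.powersetCard n).filter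
        (fun A => ((A ∩ M).card : ℝ) ≥ (n:ℝ) * M.card / s.card + τ)).card : ℝ)
      ≤ (s.card.choose n : ℝ) *
        Real.exp (-2 * τ ^ 2 * s.card / ((n:ℝ) * ((D:ℝ) + 1))) := by
  have hnr : (1:ℝ) ≤ (n:ℝ) := by exact_mod_cast hn
  have hDr : (1:ℝ) ≤ (D:ℝ) := by exact_mod_cast hD
  have hNpos : (0:ℝ) < (n:ℝ) + D := by linarith
  set t : ℝ := 4 * τ * ((n:ℝ) + D) / ((n:ℝ) * ((D:ℝ) + 1)) with ht
  have htpos : 0 < t := by rw [ht]; positivity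
  set μ0 : ℝ := (n:ℝ) * M.card / s.card with hμ0
  -- step 1: indicator ≤ exponential
  have step1 : (((s.powersetCard n).filter
        (fun A => ((A ∩ M).card : ℝ) ≥ μ0 + τ)).card : ℝ)
      ≤ ∑ A ∈ s.powersetCard n, Real.exp (t * (((A ∩ M).card : ℝ) - μ0) - t * τ) := by
    rw [Finset.card_filter]
    push_cast
    apply Finset.sum_le_sum
    intro A hA
    by_cases h : ((A ∩ M).card : ℝ) ≥ μ0 + τ
    · rw [if_pos h]
      have : 0 ≤ t * (((A ∩ M).card : ℝ) - μ0) - t * τ := by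
        have h2 : τ ≤ ((A ∩ M).card : ℝ) - μ0 := by linarith
        nlinarith [htpos, h2]
      calc (1:ℝ) = Real.exp 0 := (Real.exp_zero).symm
        _ ≤ _ := Real.exp_le_exp.mpr this
    · rw [if_neg h]
      exact (Real.exp_pos _).le
  -- step 2: factor out exp(-tτ) and apply the mgf bound
  have step2 : ∑ A ∈ s.powersetCard n, Real.exp (t * (((A ∩ M).card : ℝ) - μ0) - t * τ)
      ≤ (s.card.choose n : ℝ) * Real.exp
          (t ^ 2 * D ^ 2 / 8 * ∑ j ∈ Finset.Ico D (n + D), (1 : ℝ) / (j : ℝ) ^ 2 - t * τ) := by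
    have e : ∀ A : Finset ι, Real.exp (t * (((A ∩ M).card : ℝ) - μ0) - t * τ)
        = Real.exp (t * (((A ∩ M).card : ℝ) - μ0)) * Real.exp (- (t * τ)) := by
      intro A
      rw [← Real.exp_add]
      exact congrArg Real.exp (by ring)
    rw [Finset.sum_congr rfl (fun A _ => e A), ← Finset.sum_mul]
    have hmgf := serfling_mgf D hD n s M hM hcard t
    rw [hμ0]
    calc (∑ A ∈ s.powersetCard n, Real.exp (t * (((A ∩ M).card : ℝ) - (n:ℝ) * M.card / s.card)))
          * Real.exp (-(t * τ))
        ≤ ((s.card.choose n : ℝ) * Real.exp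
            (t ^ 2 * D ^ 2 / 8 * ∑ j ∈ Finset.Ico D (n + D), (1 : ℝ) / (j : ℝ) ^ 2))
          * Real.exp (-(t * τ)) := mul_le_mul_of_nonneg_right hmgf (Real.exp_nonneg _)
      _ = (s.card.choose n : ℝ) * Real.exp
            (t ^ 2 * D ^ 2 / 8 * ∑ j ∈ Finset.Ico D (n + D), (1 : ℝ) / (j : ℝ) ^ 2 - t * τ) := by
          rw [mul_assoc, ← Real.exp_add]
          exact congrArg (fun z => ((s.card.choose n : ℝ)) * Real.exp z) (by ring)
  -- step 3: bound the exponent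
  have step3 : t ^ 2 * D ^ 2 / 8 * ∑ j ∈ Finset.Ico D (n + D), (1 : ℝ) / (j : ℝ) ^ 2 - t * τ
      ≤ -2 * τ ^ 2 * s.card / ((n:ℝ) * ((D:ℝ) + 1)) := by
    have hsum := sum_inv_sq_le D hD n
    have h1 : t ^ 2 * D ^ 2 / 8 * ∑ j ∈ Finset.Ico D (n + D), (1 : ℝ) / (j : ℝ) ^ 2
        ≤ t ^ 2 * D ^ 2 / 8 * (((D:ℝ) + 1) * n / ((D:ℝ) ^ 2 * ((n:ℝ) + D))) :=
      mul_le_mul_of_nonneg_left hsum (by positivity)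
    have h2 : t ^ 2 * D ^ 2 / 8 * (((D:ℝ) + 1) * n / ((D:ℝ) ^ 2 * ((n:ℝ) + D)))
        = t ^ 2 * ((n:ℝ) * ((D:ℝ) + 1)) / (8 * ((n:ℝ) + D)) := by
      have hDpos : (0:ℝ) < (D:ℝ) := by linarith
      field_simp
    have h3 : t ^ 2 * ((n:ℝ) * ((D:ℝ) + 1)) / (8 * ((n:ℝ) + D)) - t * τ
        = -2 * τ ^ 2 * ((n:ℝ) + D) / ((n:ℝ) * ((D:ℝ) + 1)) := by
      rw [ht]
      have hne1 : (n:ℝ) * ((D:ℝ) + 1) ≠ 0 := by positivity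
      field_simp
      ring
    rw [hcard]
    push_cast
    linarith [h1, h2.le, h2.ge, h3.le, h3.ge]
  calc (((s.powersetCard n).filter
        (fun A => ((A ∩ M).card : ℝ) ≥ (n:ℝ) * M.card / s.card + τ)).card : ℝ)
      ≤ ∑ A ∈ s.powersetCard n, Real.exp (t * (((A ∩ M).card : ℝ) - μ0) - t * τ) := step1
    _ ≤ (s.card.choose n : ℝ) * Real.exp
          (t ^ 2 * D ^ 2 / 8 * ∑ j ∈ Finset.Ico D (n + D), (1 : ℝ) / (j : ℝ) ^ 2 - t * τ) := step2
    _ ≤ (s.card.choose n : ℝ) * Real.exp (-2 * τ ^ 2 * s.card / ((n:ℝ) * ((D:ℝ) + 1))) := by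
        apply mul_le_mul_of_nonneg_left (Real.exp_le_exp.mpr step3) (by positivity)


end Aux

lemma card_filter_compl {N : ℕ} (mm nn : ℕ) (h : mm + nn = N)
    (p : Finset (Fin N) → Prop) [DecidablePred p] :
    (((univ : Finset (Fin N)).powersetCard mm).filter (fun T => p Tᶜ)).card
      = (((univ : Finset (Fin N)).powersetCard nn).filter p).card := by
  apply Finset.card_nbij' (i := fun T => Tᶜ) (j := fun A => Aᶜ)
  · intro T hT
    simp only [Finset.mem_coe, Finset.mem_filter, Finset.mem_powersetCard] at hT ⊢
    obtain ⟨⟨_, hTcard⟩, hp⟩ := hT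
    refine ⟨⟨Finset.subset_univ _, ?_⟩, hp⟩
    rw [Finset.card_compl, hTcard, Fintype.card_fin]
    omega
  · intro A hA
    simp only [Finset.mem_coe, Finset.mem_filter, Finset.mem_powersetCard] at hA ⊢
    obtain ⟨⟨_, hAcard⟩, hp⟩ := hA
    refine ⟨⟨Finset.subset_univ _, ?_⟩, by rwa [compl_compl]⟩
    rw [Finset.card_compl, hAcard, Fintype.card_fin]
    omega
  · intro T _; simp
  · intro A _; simp


/-- Serfling-type random-sampling-without-replacement bound.
For a fixed bit string `x ∈ {0,1}^(n+m)` and a uniformly random subset `T` of size `m`,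
the probability (counting fraction over all size-`m` subsets) that the fraction of ones
outside `T` exceeds the fraction of ones in `T` by at least `μ` is at most
`exp(-(2 n m² μ²) / ((n + m)(m + 1)))`; with
`μ = √(((n + m)(m + 1)) / (n m²) · ln(2/ε))` this bound is `(ε/2)²`. -/
theorem serfling_sampling_bound
    (n m : ℕ) (hn : 1 ≤ n) (hm : 1 ≤ m)
    (x : Fin (n + m) → Bool)
    -- fraction of ones among the positions of a subset `T` of the test set,
    -- and among its complement
    (ΛT ΛTc : Finset (Fin (n + m)) → ℝ)
    (hΛT : ∀ T, ΛT T = ((T.filter fun i => x i = true).card : ℝ) / m)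
    (hΛTc : ∀ T, ΛTc T = ((Tᶜ.filter fun i => x i = true).card : ℝ) / n) :
    (∀ μ : ℝ, 0 < μ →
      ((((univ : Finset (Fin (n + m))).powersetCard m).filter
          fun T => ΛTc T ≥ ΛT T + μ).card : ℝ) /
        (((univ : Finset (Fin (n + m))).powersetCard m).card : ℝ) ≤
        Real.exp (-(2 * n * (m : ℝ) ^ 2 * μ ^ 2) / (((n : ℝ) + m) * (m + 1)))) ∧
    (∀ ε : ℝ, ε ∈ Set.Ioo (0 : ℝ) 1 →
      ((((univ : Finset (Fin (n + m))).powersetCard m).filter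
          fun T => ΛTc T ≥ ΛT T +
            Real.sqrt ((((n : ℝ) + m) * (m + 1)) / (n * (m : ℝ) ^ 2) *
              Real.log (2 / ε))).card : ℝ) /
        (((univ : Finset (Fin (n + m))).powersetCard m).card : ℝ) ≤ (ε / 2) ^ 2) := by
  classical
  have hnr : (1:ℝ) ≤ (n:ℝ) := by exact_mod_cast hn
  have hmr : (1:ℝ) ≤ (m:ℝ) := by exact_mod_cast hm
  have hNpos : (0:ℝ) < (n:ℝ) + m := by linarith
  set M : Finset (Fin (n + m)) := univ.filter (fun i => x i = true) with hMdef
  have hcard_univ : ((univ : Finset (Fin (n + m))).card) = n + m := by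
    rw [Finset.card_univ, Fintype.card_fin]
  have main : ∀ μ : ℝ, 0 < μ →
      ((((univ : Finset (Fin (n + m))).powersetCard m).filter
          fun T => ΛTc T ≥ ΛT T + μ).card : ℝ) /
        (((univ : Finset (Fin (n + m))).powersetCard m).card : ℝ) ≤
        Real.exp (-(2 * n * (m : ℝ) ^ 2 * μ ^ 2) / (((n : ℝ) + m) * (m + 1))) := by
    intro μ hμ
    set τ : ℝ := (n:ℝ) * m * μ / ((n:ℝ) + m) with hτdef
    have hτpos : 0 < τ := by rw [hτdef]; positivity
    -- the predicate, rewritten in terms of the complement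
    have hpred : ∀ T ∈ (univ : Finset (Fin (n + m))).powersetCard m,
        (ΛTc T ≥ ΛT T + μ) ↔
        (((Tᶜ ∩ M).card : ℝ) ≥
          (n:ℝ) * M.card / ((univ : Finset (Fin (n + m))).card : ℝ) + τ) := by
      intro T hT
      have hTc : Tᶜ.filter (fun i => x i = true) = Tᶜ ∩ M := by
        ext i; simp [hMdef]
      have hT2 : T.filter (fun i => x i = true) = T ∩ M := by
        ext i; simp [hMdef]
      have hdisj : Disjoint (T ∩ M) (Tᶜ ∩ M) := by
        apply Finset.disjoint_left.mpr
        intro a ha hb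
        exact (Finset.mem_compl.mp (Finset.mem_inter.mp hb).1) (Finset.mem_inter.mp ha).1
      have hunion : (T ∩ M) ∪ (Tᶜ ∩ M) = M := by
        rw [← Finset.union_inter_distrib_right, Finset.union_compl, Finset.univ_inter]
      have hcards : (T ∩ M).card + (Tᶜ ∩ M).card = M.card := by
        rw [← Finset.card_union_of_disjoint hdisj, hunion]
      have hpart : ((T ∩ M).card : ℝ) = (M.card : ℝ) - ((Tᶜ ∩ M).card : ℝ) := by
        have := hcards
        push_cast [← this]
        ring
      rw [hΛT, hΛTc, hTc, hT2, hpart, hcard_univ]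
      set j : ℝ := ((Tᶜ ∩ M).card : ℝ) with hj
      set K : ℝ := (M.card : ℝ) with hKr
      have hcast : ((n + m : ℕ) : ℝ) = (n:ℝ) + m := by push_cast; ring
      rw [hcast]
      have key : j / n - ((K - j) / m + μ)
          = (((n:ℝ) + m) / ((n:ℝ) * m)) * (j - ((n:ℝ) * K / ((n:ℝ) + m) + τ)) := by
        rw [hτdef]
        field_simp
        ring
      have hfacpos : (0:ℝ) < ((n:ℝ) + m) / ((n:ℝ) * m) := by positivity
      constructor
      · intro h
        have h1 : 0 ≤ j / n - ((K - j) / m + μ) := by linarith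
        rw [key] at h1
        have h2 : 0 ≤ j - ((n:ℝ) * K / ((n:ℝ) + m) + τ) :=
          nonneg_of_mul_nonneg_right h1 hfacpos
        linarith
      · intro h
        have h2 : 0 ≤ j - ((n:ℝ) * K / ((n:ℝ) + m) + τ) := by linarith
        have h1 := mul_nonneg hfacpos.le h2
        rw [← key] at h1
        linarith
    -- rewrite the count via the complement bijection
    have hcount : (((univ : Finset (Fin (n + m))).powersetCard m).filter
          fun T => ΛTc T ≥ ΛT T + μ).card
        = (((univ : Finset (Fin (n + m))).powersetCard n).filter
          fun A => ((A ∩ M).card : ℝ) ≥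
            (n:ℝ) * M.card / ((univ : Finset (Fin (n + m))).card : ℝ) + τ).card := by
      rw [Finset.filter_congr hpred]
      exact card_filter_compl m n (by omega)
        (fun A => ((A ∩ M).card : ℝ) ≥
          (n:ℝ) * M.card / ((univ : Finset (Fin (n + m))).card : ℝ) + τ)
    have hbound := serfling_count n m hn hm univ M (Finset.subset_univ M)
      (by rw [hcard_univ]) τ hτpos
    -- exponent computation
    have hexp_eq : -2 * τ ^ 2 * (((univ : Finset (Fin (n + m))).card : ℕ) : ℝ) / ((n:ℝ) * ((m:ℝ) + 1))
        = -(2 * n * (m : ℝ) ^ 2 * μ ^ 2) / (((n : ℝ) + m) * (m + 1)) := by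
      rw [hcard_univ, hτdef]
      push_cast
      field_simp
    rw [hexp_eq] at hbound
    -- denominator
    have hdenom : (((univ : Finset (Fin (n + m))).powersetCard m).card : ℝ)
        = (((n + m).choose m : ℕ) : ℝ) := by
      rw [Finset.card_powersetCard, hcard_univ]
    have hchoosesymm : (n + m).choose n = (n + m).choose m := by
      rw [← Nat.choose_symm (by omega : n ≤ n + m)]
      congr 1
      omega
    have hchoosepos : (0:ℝ) < (((n + m).choose m : ℕ) : ℝ) := by
      exact_mod_cast Nat.choose_pos (by omega : m ≤ n + m)
    rw [show (#(univ : Finset (Fin (n + m)))).choose n = (n + m).choose n from by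
      rw [hcard_univ]] at hbound
    rw [hdenom, div_le_iff₀ hchoosepos]
    calc ((((univ : Finset (Fin (n + m))).powersetCard m).filter
            fun T => ΛTc T ≥ ΛT T + μ).card : ℝ)
        = ((((univ : Finset (Fin (n + m))).powersetCard n).filter
            fun A => ((A ∩ M).card : ℝ) ≥
              (n:ℝ) * M.card / ((univ : Finset (Fin (n + m))).card : ℝ) + τ).card : ℝ) := by
          exact Nat.cast_inj.mpr hcount
      _ ≤ (((n + m).choose n : ℕ) : ℝ) *
            Real.exp (-(2 * n * (m : ℝ) ^ 2 * μ ^ 2) / (((n : ℝ) + m) * (m + 1))) := hbound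
      _ = Real.exp (-(2 * n * (m : ℝ) ^ 2 * μ ^ 2) / (((n : ℝ) + m) * (m + 1))) *
            (((n + m).choose m : ℕ) : ℝ) := by
          rw [hchoosesymm]; ring
  refine ⟨main, ?_⟩
  intro ε hε
  obtain ⟨hε0, hε1⟩ := hε
  have h2ε : (1:ℝ) < 2 / ε := by
    rw [lt_div_iff₀ hε0]; linarith
  have hlog : 0 < Real.log (2 / ε) := Real.log_pos h2ε
  have harg : 0 < (((n : ℝ) + m) * (m + 1)) / (n * (m : ℝ) ^ 2) * Real.log (2 / ε) := by
    have h1 : (0:ℝ) < ((n : ℝ) + m) * (m + 1) := by nlinarith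
    have h2 : (0:ℝ) < (n:ℝ) * (m : ℝ) ^ 2 := by nlinarith
    positivity
  set μ := Real.sqrt ((((n : ℝ) + m) * (m + 1)) / (n * (m : ℝ) ^ 2) * Real.log (2 / ε)) with hμdef
  have hμpos : 0 < μ := Real.sqrt_pos.mpr harg
  have h := main μ hμpos
  refine h.trans (le_of_eq ?_)
  have hμsq : μ ^ 2 = (((n : ℝ) + m) * (m + 1)) / (n * (m : ℝ) ^ 2) * Real.log (2 / ε) :=
    Real.sq_sqrt harg.le
  have hexp2 : -(2 * n * (m : ℝ) ^ 2 * μ ^ 2) / (((n : ℝ) + m) * (m + 1))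
      = -(2 * Real.log (2 / ε)) := by
    rw [hμsq]
    have h1 : ((n : ℝ) + m) * ((m:ℝ) + 1) ≠ 0 := by nlinarith
    have h2 : (n:ℝ) * (m : ℝ) ^ 2 ≠ 0 := by nlinarith
    field_simp
  rw [hexp2, Real.exp_neg]
  rw [show (2:ℝ) * Real.log (2 / ε) = Real.log ((2 / ε) ^ 2) by
    rw [Real.log_pow]; push_cast; ring]
  rw [Real.exp_log (by positivity)]
  rw [← inv_pow, inv_div]
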